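/- As z → ∞ with z ∈ ℂ ∖ (−∞, 0], D(z) = 1 − α z^{−1/2} + (α²/2) z^{−1} + O(|z|^{−3/2}); that is, there exist R, C > 0 such that |D(z) − 1 + α z^{−1/2} − (α²/2) z^{−1}| ≤ C|z|^{−3/2} for all z ∈ ℂ ∖ (−∞, 0] with |z| ≥ R, where z^{−1/2} is the principal branch. -/

import Mathlib

open Complex Set

private lemma one_sub_ne {x : ℂ} (hx : ‖x‖ ≤ 1/2) : (1 : ℂ) - x ≠ 0 := by
  intro h
  have : (1:ℂ) = x := by linear_combination h
  rw [← this] at hx; simp at hx; norm_num at hx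

private lemma one_add_ne {x : ℂ} (hx : ‖x‖ ≤ 1/2) : (1 : ℂ) + x ≠ 0 := by
  intro h
  have : x = -1 := by linear_combination h
  rw [this] at hx; simp at hx; norm_num at hx

private lemma ratio_mem_slitPlane {x : ℂ} (hx : ‖x‖ ≤ 1/2) :
    (1 + x) / (1 - x) ∈ Complex.slitPlane := by
  have h1 : ((1 + x) / (1 - x)).re > 0 := by
    rw [Complex.div_re]
    have hns : 0 < Complex.normSq (1 - x) := Complex.normSq_pos.2 (one_sub_ne hx)
    rw [← add_div]
    apply div_pos _ hns
    have habs : x.re ^ 2 + x.im ^ 2 ≤ 1/4 := by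
      have h1 := Complex.sq_norm x
      have h2 : ‖x‖ ^ 2 ≤ 1/4 := by nlinarith [norm_nonneg x]
      rw [Complex.normSq_apply] at h1; nlinarith
    simp only [Complex.add_re, Complex.add_im, Complex.sub_re, Complex.sub_im,
      Complex.one_re, Complex.one_im]
    nlinarith
  exact Or.inl h1

/-- Core estimate: `|log((1+v)/(1-v)) - 2v| ≤ 3 |v|^3` for `|v| ≤ 1/2`. -/
private lemma log_ratio_bound {v : ℂ} (hv : ‖v‖ ≤ 1/2) :
    ‖Complex.log ((1 + v) / (1 - v)) - 2 * v‖ ≤ 3 * ‖v‖ ^ 3 := by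
  set r := ‖v‖ with hr
  have hr0 : 0 ≤ r := norm_nonneg v
  set f : ℂ → ℂ := fun x => Complex.log ((1 + x) / (1 - x)) - 2 * x with hf
  set f' : ℂ → ℂ := fun x => 2 / ((1 - x) * (1 + x)) - 2 with hf'
  have hmem : ∀ x ∈ Metric.closedBall (0:ℂ) r, ‖x‖ ≤ 1/2 := by
    intro x hx
    rw [Metric.mem_closedBall, dist_zero_right] at hx
    calc ‖x‖ = ‖x‖ := rfl
    _ ≤ r := hx
    _ ≤ 1/2 := hv
  have hderiv : ∀ x ∈ Metric.closedBall (0:ℂ) r,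
      HasDerivWithinAt f (f' x) (Metric.closedBall (0:ℂ) r) x := by
    intro x hx
    have hx2 := hmem x hx
    have h1s : (1:ℂ) - x ≠ 0 := one_sub_ne hx2
    have h1a : (1:ℂ) + x ≠ 0 := one_add_ne hx2
    have hg : HasDerivAt (fun y : ℂ => (1 + y) / (1 - y))
        ((1 * (1 - x) - (1 + x) * (-1)) / (1 - x) ^ 2) x :=
      HasDerivAt.div ((hasDerivAt_id x).const_add 1)
        ((hasDerivAt_id x).neg.const_add 1) h1s
    have hlog : HasDerivAt Complex.log ((1 + x) / (1 - x))⁻¹ ((1 + x) / (1 - x)) :=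
      Complex.hasDerivAt_log (ratio_mem_slitPlane hx2)
    have hcomp := hlog.comp x hg
    have h2 : HasDerivAt f
        (((1 + x) / (1 - x))⁻¹ * ((1 * (1 - x) - (1 + x) * (-1)) / (1 - x) ^ 2) - 2 * 1) x :=
      hcomp.sub ((hasDerivAt_id x).const_mul 2)
    have heq : ((1 + x) / (1 - x))⁻¹ * ((1 * (1 - x) - (1 + x) * (-1)) / (1 - x) ^ 2) - 2 * 1
        = f' x := by
      rw [hf']
      field_simp
      ring
    rw [heq] at h2
    exact h2.hasDerivWithinAt
  have hbound : ∀ x ∈ Metric.closedBall (0:ℂ) r, ‖f' x‖ ≤ 3 * r ^ 2 := by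
    intro x hx
    have hx2 := hmem x hx
    have hxr : ‖x‖ ≤ r := by
      rw [Metric.mem_closedBall, dist_zero_right] at hx; exact hx
    have h1s : (1:ℂ) - x ≠ 0 := one_sub_ne hx2
    have h1a : (1:ℂ) + x ≠ 0 := one_add_ne hx2
    have heq : f' x = 2 * x ^ 2 / ((1 - x) * (1 + x)) := by
      rw [hf']; field_simp; ring
    rw [heq]
    have hden : (3:ℝ)/4 ≤ ‖(1 - x) * (1 + x)‖ := by
      have he : (1 - x) * (1 + x) = 1 - x ^ 2 := by ring
      rw [he]
      have h3 : ‖(1:ℂ)‖ - ‖x ^ 2‖ ≤ ‖(1:ℂ) - x ^ 2‖ := norm_sub_norm_le 1 (x ^ 2)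
      have h4 : ‖x ^ 2‖ ≤ 1/4 := by
        rw [norm_pow]
        have : ‖x‖ ≤ 1/2 := hx2
        nlinarith [norm_nonneg x]
      simp only [norm_one] at h3
      calc (3:ℝ)/4 ≤ ‖(1:ℂ) - x ^ 2‖ := by linarith
      _ = ‖1 - x ^ 2‖ := rfl
    have hnum : ‖2 * x ^ 2‖ ≤ 2 * r ^ 2 := by
      rw [norm_mul, norm_pow]
      simp only [Complex.norm_two]
      nlinarith [norm_nonneg x]
    calc ‖2 * x ^ 2 / ((1 - x) * (1 + x))‖
        = ‖2 * x ^ 2‖ / ‖(1 - x) * (1 + x)‖ := by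
          rw [norm_div]
    _ ≤ (2 * r ^ 2) / (3/4) :=
        div_le_div₀ (by positivity) hnum (by norm_num) hden
    _ ≤ 3 * r ^ 2 := by nlinarith
  have h0mem : (0:ℂ) ∈ Metric.closedBall (0:ℂ) r := by
    simp [hr0]
  have hvmem : v ∈ Metric.closedBall (0:ℂ) r := by
    simp [Metric.mem_closedBall, dist_zero_right, hr]
  have hmvt := Convex.norm_image_sub_le_of_norm_hasDerivWithin_le hderiv hbound
    (convex_closedBall (0:ℂ) r) h0mem hvmem
  have hf0 : f 0 = 0 := by
    simp [hf, Complex.log_one]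
  rw [hf0, sub_zero, sub_zero] at hmvt
  calc ‖Complex.log ((1 + v) / (1 - v)) - 2 * v‖ = ‖f v‖ := rfl
  _ ≤ 3 * r ^ 2 * ‖v‖ := hmvt
  _ = 3 * r ^ 3 := by rw [hr]; ring_nf

private lemma sqrt_re_pos {x : ℂ} (hx : x ∈ Complex.slitPlane) :
    0 < (x ^ ((1:ℂ)/2)).re := by
  have hx0 : x ≠ 0 := Complex.slitPlane_ne_zero hx
  rw [Complex.cpow_def_of_ne_zero hx0, Complex.exp_re]
  apply mul_pos (Real.exp_pos _)
  have him : (Complex.log x * ((1:ℂ)/2)).im = Complex.arg x / 2 := by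
    simp [Complex.mul_im, Complex.log_im]
    ring
  rw [him]
  apply Real.cos_pos_of_mem_Ioo
  constructor
  · have := Complex.neg_pi_lt_arg x
    linarith
  · have h1 := Complex.arg_le_pi x
    have h2 := Complex.slitPlane_arg_ne_pi hx
    have : Complex.arg x < Real.pi := lt_of_le_of_ne h1 h2
    linarith

private lemma sqrt_im_nonneg {x : ℂ} (hx : x ≠ 0) (h : 0 ≤ x.im) :
    0 ≤ (x ^ ((1:ℂ)/2)).im := by
  rw [Complex.cpow_def_of_ne_zero hx, Complex.exp_im]
  have him : (Complex.log x * ((1:ℂ)/2)).im = Complex.arg x / 2 := by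
    simp [Complex.mul_im, Complex.log_im]
    ring
  rw [him]
  have harg : 0 ≤ Complex.arg x := Complex.arg_nonneg_iff.2 h
  have hs : 0 ≤ Real.sin (Complex.arg x / 2) := by
    apply Real.sin_nonneg_of_nonneg_of_le_pi (by linarith)
    have := Complex.arg_le_pi x
    linarith [Real.pi_pos]
  positivity

private lemma sqrt_im_nonpos {x : ℂ} (hx' : x ∈ Complex.slitPlane) (h : x.im ≤ 0) :
    (x ^ ((1:ℂ)/2)).im ≤ 0 := by
  have hx : x ≠ 0 := Complex.slitPlane_ne_zero hx'
  rw [Complex.cpow_def_of_ne_zero hx, Complex.exp_im]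
  have him : (Complex.log x * ((1:ℂ)/2)).im = Complex.arg x / 2 := by
    simp [Complex.mul_im, Complex.log_im]
    ring
  rw [him]
  have harg : Complex.arg x ≤ 0 := by
    rcases lt_or_eq_of_le h with h' | h'
    · exact (Complex.arg_neg_iff.2 h').le
    · have hre : 0 < x.re := by
        rcases hx' with h2 | h2
        · exact h2
        · exact absurd h' h2
      exact le_of_eq (Complex.arg_eq_zero_iff.2 ⟨hre.le, h'⟩)
  have hs : Real.sin (Complex.arg x / 2) ≤ 0 := by
    have h2 : 0 ≤ Real.sin (-(Complex.arg x / 2)) := by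
      apply Real.sin_nonneg_of_nonneg_of_le_pi (by linarith)
      have := Complex.neg_pi_lt_arg x
      linarith [Real.pi_pos]
    rw [Real.sin_neg] at h2
    linarith
  have h1 : 0 < Real.exp (Complex.log x * ((1:ℂ)/2)).re := Real.exp_pos _
  nlinarith

private lemma exp_taylor_bound {u : ℂ} (hu : ‖u‖ ≤ 1) :
    ‖Complex.exp u - (1 + u + u^2/2)‖ ≤ ‖u‖ ^ 3 := by
  have h := Complex.exp_bound hu (by norm_num : 0 < 3)
  have hsum : ∑ m ∈ Finset.range 3, u ^ m / (m.factorial : ℂ) = 1 + u + u^2/2 := by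
    simp [Finset.sum_range_succ, Nat.factorial]
  rw [hsum] at h
  refine h.trans ?_
  have h2 : ((Nat.succ 3 : ℕ) : ℝ) * (((3:ℕ).factorial * 3 : ℝ))⁻¹ ≤ 1 := by
    norm_num [Nat.factorial]
  nlinarith [pow_nonneg (norm_nonneg u) 3]

private lemma abs_le_abs_add' {a b : ℂ} (ha : 0 < a.re) (hb : 0 < b.re)
    (him : 0 ≤ a.im * b.im) : ‖a‖ ≤ ‖a + b‖ := by
  refine le_of_pow_le_pow_left₀ two_ne_zero (norm_nonneg (a+b)) ?_
  rw [Complex.sq_norm, Complex.sq_norm, Complex.normSq_apply, Complex.normSq_apply]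
  simp only [Complex.add_re, Complex.add_im]
  nlinarith [sq_nonneg b.re, sq_nonneg b.im, mul_nonneg ha.le hb.le]

private lemma cube_ineq {r s : ℝ} (hr0 : 0 ≤ r) (hs : 2 ≤ s) (h : r * s ≤ 2) :
    r^3 ≤ 8 / s^3 := by
  have hs0 : (0:ℝ) < s := by linarith
  have h3 : (0:ℝ) < s^3 := by positivity
  rw [le_div_iff₀ h3]
  have h1 : (r*s)^3 ≤ 2^3 := pow_le_pow_left₀ (mul_nonneg hr0 hs0.le) h 3
  calc r^3 * s^3 = (r*s)^3 := by ring
  _ ≤ 8 := by norm_num at h1 ⊢; linarith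

private lemma final_ineq {A s r : ℝ} (hA0 : 0 ≤ A) (hs : 2 ≤ s) (hr3 : r^3 ≤ 8/s^3)
    (hr0 : 0 ≤ r) :
    12*(A+1)^3 * r^3 + A * (2/s^3) + A^2/2 * (2/s^4) ≤ 100 * (A+1)^3 * (s^3)⁻¹ := by
  have hs0 : (0:ℝ) < s := by linarith
  have hb1 : 12*(A+1)^3 * r^3 ≤ 96*(A+1)^3 / s^3 := by
    calc 12*(A+1)^3*r^3
        ≤ 12*(A+1)^3*(8/s^3) := mul_le_mul_of_nonneg_left hr3 (by positivity)
      _ = 96*(A+1)^3/s^3 := by ring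
  have hb2 : A*(2/s^3) = 2*A/s^3 := by ring
  have hb3 : A^2/2*(2/s^4) ≤ A^2/s^3 := by
    have he : A^2/2*(2/s^4) = A^2/s^4 := by ring
    rw [he]
    apply div_le_div_of_nonneg_left (by positivity) (by positivity)
    nlinarith [mul_le_mul_of_nonneg_left hs (pow_nonneg hs0.le 3), pow_nonneg hs0.le 3]
  calc 12*(A+1)^3 * r^3 + A * (2/s^3) + A^2/2 * (2/s^4)
      ≤ 96*(A+1)^3/s^3 + 2*A/s^3 + A^2/s^3 := by
        rw [hb2] at *
        linarith
    _ = (96*(A+1)^3 + 2*A + A^2)/s^3 := by ring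
    _ ≤ 100*(A+1)^3/s^3 := by
        apply div_le_div_of_nonneg_right ?_ (by positivity)
        nlinarith
    _ = 100*(A+1)^3*(s^3)⁻¹ := by ring

/-- The Szegő-type function `D(z) = (((z+1)^{1/2} + 1)/((z+1)^{1/2} − 1))^{−α/2}`,
with all powers taken as principal branches. -/
noncomputable def DFun (α : ℝ) (z : ℂ) : ℂ :=
  ((((z + 1) ^ ((1 : ℂ) / 2) + 1) / ((z + 1) ^ ((1 : ℂ) / 2) - 1)) ^ (-(α : ℂ) / 2))

set_option maxHeartbeats 2000000 in
/-- As `z → ∞` off `(−∞, 0]`,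
`D(z) = 1 − α z^{−1/2} + (α²/2) z^{−1} + O(|z|^{−3/2})`. -/
theorem DFun_asymptotics_at_infinity (α : ℝ) (hα : -1 < α) :
    ∃ R > (0 : ℝ), ∃ C > (0 : ℝ), ∀ z : ℂ, ¬(z.im = 0 ∧ z.re ≤ 0) →
      R ≤ ‖z‖ →
      ‖DFun α z - 1 + (α : ℂ) * z ^ (-(1 : ℂ) / 2) - ((α : ℂ) ^ 2 / 2) * z⁻¹‖
        ≤ C * (‖z‖) ^ (-(3 : ℝ) / 2) := by
  set A := |α| with hA
  have hA0 : 0 ≤ A := abs_nonneg α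
  refine ⟨4 * (A + 1)^2 + 1, by positivity, 100 * (A + 1)^3, by positivity, ?_⟩
  intro z hz hR
  push_neg at hz
  have hzslit : z ∈ Complex.slitPlane := by
    rw [Complex.mem_slitPlane_iff]
    by_cases him : z.im = 0
    · exact Or.inl (hz him)
    · exact Or.inr him
  have hz1slit : z + 1 ∈ Complex.slitPlane := by
    rw [Complex.mem_slitPlane_iff]
    by_cases him : z.im = 0
    · left; simp only [Complex.add_re, Complex.one_re]; linarith [hz him]
    · right; simpa using him
  have hz0 : z ≠ 0 := Complex.slitPlane_ne_zero hzslit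
  have hz10 : z + 1 ≠ 0 := Complex.slitPlane_ne_zero hz1slit
  set b : ℂ := (z + 1) ^ ((1:ℂ)/2) with hbdef
  set a : ℂ := z ^ ((1:ℂ)/2) with hadef
  have hb2 : b * b = z + 1 := by
    rw [hbdef, ← Complex.cpow_add _ _ hz10]; norm_num
  have ha2 : a * a = z := by
    rw [hadef, ← Complex.cpow_add _ _ hz0]; norm_num
  have hb0 : b ≠ 0 := by intro h; rw [h, mul_zero] at hb2; exact hz10 hb2.symm
  have ha0 : a ≠ 0 := by intro h; rw [h, mul_zero] at ha2; exact hz0 ha2.symm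
  set v : ℂ := b⁻¹ with hvdef
  set s : ℝ := Real.sqrt (‖z‖) with hsdef
  have hs2 : s ^ 2 = ‖z‖ := Real.sq_sqrt (norm_nonneg z)
  have hs0 : 0 ≤ s := Real.sqrt_nonneg _
  have hA1 : (1:ℝ) ≤ A + 1 := by linarith
  have hs2ge : 4 * (A + 1)^2 + 1 ≤ s ^ 2 := by rw [hs2]; exact hR
  have hAsq : (1:ℝ) ≤ (A + 1)^2 := by nlinarith
  have hs4 : (4:ℝ) ≤ s ^ 2 := by nlinarith
  have hs2' : 2 ≤ s := le_of_pow_le_pow_left₀ two_ne_zero hs0 (by nlinarith)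
  have hz1abs : ‖z‖ - 1 ≤ ‖z + 1‖ := by
    have h := norm_add_le (z + 1) (-1)
    simp only [add_neg_cancel_right, norm_neg, norm_one] at h
    linarith
  have hz1abs' : s^2/2 ≤ ‖z + 1‖ := by
    have := hs2.le
    linarith [hz1abs, hs4, hs2.le, hs2.ge]
  have habsb2 : ‖b‖ ^ 2 = ‖z + 1‖ := by
    have h := congrArg norm hb2; rw [norm_mul] at h; rw [sq]; exact h
  have habsa2 : ‖a‖ ^ 2 = ‖z‖ := by
    have h := congrArg norm ha2; rw [norm_mul] at h; rw [sq]; exact h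
  have habs_a : ‖a‖ = s := by
    rw [← Real.sqrt_sq (norm_nonneg a), habsa2, hsdef]
  have hb_lb1 : 2 * (A + 1) ≤ ‖b‖ := by
    refine le_of_pow_le_pow_left₀ two_ne_zero (norm_nonneg b) ?_
    rw [habsb2]
    nlinarith [hz1abs, hR]
  have hb_lb2 : s / 2 ≤ ‖b‖ := by
    refine le_of_pow_le_pow_left₀ two_ne_zero (norm_nonneg b) ?_
    rw [habsb2]
    nlinarith [hz1abs', sq_nonneg s]
  have hbpos : 0 < ‖b‖ := by linarith
  set r : ℝ := ‖v‖ with hrdef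
  have hr0 : 0 ≤ r := norm_nonneg v
  have hrb : r * ‖b‖ = 1 := by
    rw [hrdef, hvdef, norm_inv]; field_simp
  have hr1 : r * (2 * (A + 1)) ≤ 1 := by
    calc r * (2 * (A + 1)) ≤ r * ‖b‖ := mul_le_mul_of_nonneg_left hb_lb1 hr0
    _ = 1 := hrb
  have hr12 : ‖v‖ ≤ 1/2 := by
    rw [← hrdef]
    nlinarith [mul_nonneg hA0 hr0]
  have hrs : r * s ≤ 2 := by
    have h1 : r * (s / 2) ≤ 1 := by
      calc r * (s / 2) ≤ r * ‖b‖ := mul_le_mul_of_nonneg_left hb_lb2 hr0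
      _ = 1 := hrb
    linarith
  -- rewrite DFun as an exponential
  have hbne1 : b - 1 ≠ 0 := by
    intro h
    have hb1 : b = 1 := by
      have := sub_eq_zero.mp h
      exact this
    rw [hb1, norm_one] at hbpos hb_lb1; nlinarith
  have hbne1' : b + 1 ≠ 0 := by
    intro h
    have hb1 : b = -1 := eq_neg_of_add_eq_zero_left h
    rw [hb1] at hb_lb1; simp at hb_lb1; nlinarith
  have hratio : (b + 1)/(b - 1) = (1 + v)/(1 - v) := by
    rw [hvdef]
    rw [div_eq_div_iff hbne1 (one_sub_ne (by rw [← hvdef]; exact hr12))]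
    field_simp
  set L : ℂ := Complex.log ((1 + v)/(1 - v)) with hLdef
  set u : ℂ := L * (-(α:ℂ)/2) with hudef
  have hD : DFun α z = Complex.exp u := by
    have h1 : DFun α z = ((b + 1)/(b - 1)) ^ (-(α:ℂ)/2) := rfl
    rw [h1, hratio, Complex.cpow_def_of_ne_zero
      (div_ne_zero (one_add_ne hr12) (one_sub_ne hr12))]
  -- core estimates
  have hL2v : ‖L - 2*v‖ ≤ 3 * r^3 := log_ratio_bound hr12
  have habsα : ‖-(α:ℂ)/2‖ = A/2 := by
    rw [norm_div, Complex.norm_two]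
    congr 1
    rw [show -(α:ℂ) = ((-α : ℝ) : ℂ) by push_cast; ring, Complex.norm_real, Real.norm_eq_abs, abs_neg, hA]
  have hu_av : ‖u + (α:ℂ)*v‖ ≤ 3*A/2 * r^3 := by
    have h1 : u + (α:ℂ)*v = (L - 2*v) * (-(α:ℂ)/2) := by rw [hudef]; ring
    rw [h1, norm_mul, habsα]
    calc ‖L - 2*v‖ * (A/2) ≤ (3 * r^3) * (A/2) :=
        mul_le_mul_of_nonneg_right hL2v (by positivity)
      _ = 3*A/2 * r^3 := by ring
  have habsav : ‖(α:ℂ)*v‖ = A * r := by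
    rw [norm_mul, Complex.norm_real, Real.norm_eq_abs, ← hA, ← hrdef]
  have hu_le : ‖u‖ ≤ 2*A*r := by
    have h2 := norm_add_le (u + (α:ℂ)*v) (-((α:ℂ)*v))
    simp only [add_neg_cancel_right, norm_neg] at h2
    rw [habsav] at h2
    have hrr : r ≤ 1/2 := hrdef ▸ hr12
    nlinarith [hu_av, mul_nonneg hA0 hr0, hr0, sq_nonneg r,
      mul_le_mul_of_nonneg_right (mul_le_mul_of_nonneg_left hrr hA0)
        (mul_nonneg hr0 hr0)]
  have hu1 : ‖u‖ ≤ 1 := by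
    nlinarith [hu_le, hr1, hr0]
  have hexp3 : ‖Complex.exp u - (1 + u + u^2/2)‖ ≤ 8*A^3*r^3 := by
    refine (exp_taylor_bound hu1).trans ?_
    calc ‖u‖ ^ 3 ≤ (2*A*r)^3 :=
      pow_le_pow_left₀ (norm_nonneg u) hu_le 3
    _ = 8*A^3*r^3 := by ring
  have hdiff : ‖(u^2 - (α:ℂ)^2*v^2)/2‖ ≤ 9/4*A^2*r^4 := by
    have h1 : (u^2 - (α:ℂ)^2*v^2)/2 = (u - (α:ℂ)*v) * ((u + (α:ℂ)*v) / 2) := by ring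
    rw [h1, norm_mul, norm_div, Complex.norm_two]
    have h2 : ‖u - (α:ℂ)*v‖ ≤ 3*A*r := by
      have h3 := norm_sub_le u ((α:ℂ)*v)
      rw [habsav] at h3
      nlinarith
    have h4 : ‖u + (α:ℂ)*v‖ / 2 ≤ 3*A/4 * r^3 := by linarith
    calc ‖u - (α:ℂ)*v‖ * (‖u + (α:ℂ)*v‖ / 2)
        ≤ (3*A*r) * (3*A/4 * r^3) :=
          mul_le_mul h2 h4 (by positivity) (by positivity)
      _ = 9/4*A^2*r^4 := by ring
  have hE1 : ‖Complex.exp u - (1 - (α:ℂ)*v + (α:ℂ)^2*v^2/2)‖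
      ≤ 12*(A+1)^3 * r^3 := by
    have hsplit : Complex.exp u - (1 - (α:ℂ)*v + (α:ℂ)^2*v^2/2)
        = (Complex.exp u - (1 + u + u^2/2)) + ((u + (α:ℂ)*v) + (u^2 - (α:ℂ)^2*v^2)/2) := by
      ring
    rw [hsplit]
    refine (norm_add_le _ _).trans ?_
    refine (add_le_add hexp3 ((norm_add_le _ _).trans (add_le_add hu_av hdiff))).trans ?_
    have hrr : r ≤ 1/2 := hrdef ▸ hr12
    have hr4 : 9/4*A^2*r^4 ≤ 9/8*A^2*r^3 := by
      nlinarith [mul_le_mul_of_nonneg_left hrr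
        (by positivity : (0:ℝ) ≤ 9/4*A^2*r^3)]
    have hco : (8*A^3 + 3*A/2 + 9/8*A^2) * r^3 ≤ 12*(A+1)^3 * r^3 :=
      mul_le_mul_of_nonneg_right (by nlinarith [hA0, sq_nonneg A, pow_nonneg hA0 3])
        (pow_nonneg hr0 3)
    have hstep : 8*A^3*r^3 + (3*A/2*r^3 + 9/4*A^2*r^4)
        ≤ (8*A^3 + 3*A/2 + 9/8*A^2) * r^3 := by nlinarith [hr4]
    linarith [hstep, hco]
  -- square-root comparison estimates
  have ha_re : 0 < a.re := sqrt_re_pos hzslit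
  have hb_re : 0 < b.re := sqrt_re_pos hz1slit
  have him_ab : 0 ≤ a.im * b.im := by
    rcases le_or_gt 0 z.im with h | h
    · exact mul_nonneg (sqrt_im_nonneg hz0 h)
        (sqrt_im_nonneg hz10 (by simpa using h))
    · have h1 := sqrt_im_nonpos hzslit h.le
      have h2 := sqrt_im_nonpos hz1slit (show (z+1).im ≤ 0 by simpa using h.le)
      have h3 := mul_nonneg (neg_nonneg.2 h1) (neg_nonneg.2 h2)
      rw [neg_mul_neg] at h3
      exact h3
  have habsum : ‖a‖ ≤ ‖a + b‖ := abs_le_abs_add' ha_re hb_re him_ab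
  have hapos : 0 < ‖a‖ := by rw [habs_a]; linarith
  have hsumpos : 0 < ‖a + b‖ := lt_of_lt_of_le hapos habsum
  have hsum0 : a + b ≠ 0 := by
    intro h; rw [h, norm_zero] at hsumpos; exact lt_irrefl _ hsumpos
  have hz_neg_half : z ^ (-(1:ℂ)/2) = a⁻¹ := by
    rw [hadef, show (-(1:ℂ)/2) = -((1:ℂ)/2) by ring, Complex.cpow_neg]
  have hba : (b - a) * (a + b) = 1 := by linear_combination hb2 - ha2
  have hE2 : ‖a⁻¹ - b⁻¹‖ ≤ 2 / s^3 := by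
    have heq : a⁻¹ - b⁻¹ = (b - a) / (a * b) := by field_simp
    rw [heq, norm_div, norm_mul, habs_a]
    have h7 : ‖b - a‖ ≤ 1/s := by
      have h8 : ‖b - a‖ = (‖a + b‖)⁻¹ := by
        have h9 : ‖b - a‖ * ‖a + b‖ = 1 := by
          rw [← norm_mul, hba, norm_one]
        exact eq_inv_of_mul_eq_one_left h9
      rw [h8, one_div]
      exact inv_anti₀ (by linarith) (habs_a ▸ habsum)
    calc ‖b - a‖ / (s * ‖b‖)
        ≤ (1/s) / (s * (s/2)) := by
          apply div_le_div₀ (by positivity) h7 (by positivity)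
          exact mul_le_mul_of_nonneg_left hb_lb2 hs0
      _ = 2 / s^3 := by
          field_simp
  have hv2 : v^2 = (z+1)⁻¹ := by
    rw [hvdef, sq, ← mul_inv, hb2]
  have hE3 : ‖v^2 - z⁻¹‖ ≤ 2 / s^4 := by
    have heq : v^2 - z⁻¹ = -(z * (z+1))⁻¹ := by
      rw [hv2]; field_simp; ring
    rw [heq, norm_neg, norm_inv, norm_mul]
    rw [← hs2]
    have h1 : s^2 * (s^2/2) ≤ s^2 * ‖z+1‖ :=
      mul_le_mul_of_nonneg_left hz1abs' (by positivity)
    have h2 : (0:ℝ) < s^2 * (s^2/2) := by positivity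
    calc (s^2 * ‖z+1‖)⁻¹
        ≤ (s^2 * (s^2/2))⁻¹ := inv_anti₀ h2 h1
      _ = 2 / s^4 := by field_simp
  -- final assembly
  have hsplit2 : DFun α z - 1 + (α:ℂ) * z ^ (-(1:ℂ)/2) - ((α:ℂ)^2/2) * z⁻¹
      = (Complex.exp u - (1 - (α:ℂ)*v + (α:ℂ)^2*v^2/2)) + (α:ℂ) * (a⁻¹ - b⁻¹)
        + ((α:ℂ)^2/2) * (v^2 - z⁻¹) := by
    rw [hD, hz_neg_half, hvdef]
    ring
  rw [hsplit2]
  have hpow : (‖z‖) ^ (-(3:ℝ)/2) = (s^3)⁻¹ := by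
    rw [← hs2, ← Real.rpow_natCast s 2, ← Real.rpow_mul hs0, ← Real.rpow_natCast s 3,
      ← Real.rpow_neg hs0]
    norm_num
  rw [hpow]
  have habs2 : ‖(α:ℂ)^2/2‖ = A^2/2 := by
    rw [norm_div, norm_pow, Complex.norm_real, Real.norm_eq_abs, Complex.norm_two, hA]
  have step1 := (norm_add_le ((Complex.exp u - (1 - (α:ℂ)*v + (α:ℂ)^2*v^2/2))
      + (α:ℂ) * (a⁻¹ - b⁻¹)) (((α:ℂ)^2/2) * (v^2 - z⁻¹)))
  have step2 := norm_add_le (Complex.exp u - (1 - (α:ℂ)*v + (α:ℂ)^2*v^2/2))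
      ((α:ℂ) * (a⁻¹ - b⁻¹))
  have hterm2 : ‖(α:ℂ) * (a⁻¹ - b⁻¹)‖ ≤ A * (2/s^3) := by
    rw [norm_mul, Complex.norm_real, Real.norm_eq_abs, ← hA]
    exact mul_le_mul_of_nonneg_left hE2 hA0
  have hterm3 : ‖((α:ℂ)^2/2) * (v^2 - z⁻¹)‖ ≤ A^2/2 * (2/s^4) := by
    rw [norm_mul, habs2]
    exact mul_le_mul_of_nonneg_left hE3 (by positivity)
  have hr3 : r^3 ≤ 8/s^3 := cube_ineq hr0 hs2' hrs
  have hspos : (0:ℝ) < s := by linarith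
  have hfin := final_ineq hA0 hs2' hr3 hr0
  refine le_trans step1 ?_
  refine le_trans (add_le_add (le_trans step2 (add_le_add hE1 hterm2)) hterm3) ?_
  exact hfin
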